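/- (Iteration step in the Carleson proof.) Suppose 0 < ρ < 1, γ > 0, and x, z ∈ 𝒞 ∩ B_{2R}(y) satisfy: δ(x) < (1 − ((1+ρ)/2)^{1/γ}) (2R − |x−y|)/(8√d), u(x) ≤ ρ u(z), and |z − x_0| ≤ 3√d δ(x) where |x − x_0| = δ(x). Then (2R − |x−y|)^γ u(x) ≤ (2ρ/(1+ρ)) (2R − |z−y|)^γ u(z). In particular, setting θ_0 = 2ρ/(1+ρ) < 1, one gets (2R − |x−y|)^γ u(x) ≤ θ_0 · max_{x' ∈ 𝒞 ∩ B_{2R}(y)} (2R − |x'−y|)^γ u(x'). -/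

import Mathlib

open Finset

/-- Points of `ℤ^d` written as `ℤ × ℤ^{d-1}` (so `d = m + 1`). -/
abbrev Pt (m : ℕ) := ℤ × (Fin m → ℤ)

/-- The Euclidean norm of a lattice point. -/
noncomputable def enorm {m : ℕ} (x : Pt m) : ℝ :=
  Real.sqrt ((x.1 : ℝ) ^ 2 + ∑ i, ((x.2 i : ℝ)) ^ 2)

/-- The `Γ`-boundary `∂A = {x ∉ A : x = z + e, z ∈ A, e ∈ Γ}`. -/
def gbdry {m : ℕ} (Γ : Finset (Pt m)) (A : Set (Pt m)) : Set (Pt m) :=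
  {x | x ∉ A ∧ ∃ z ∈ A, ∃ e ∈ Γ, x = z + e}

/-- The closure `A ∪ ∂A`. -/
def gcl {m : ℕ} (Γ : Finset (Pt m)) (A : Set (Pt m)) : Set (Pt m) :=
  A ∪ gbdry Γ A

/-- `u` is harmonic at `x`: `u x = ∑_{e ∈ Γ} π x e * u (x + e)`. -/
def HarmAt {m : ℕ} (Γ : Finset (Pt m)) (π : Pt m → Pt m → ℝ)
    (u : Pt m → ℝ) (x : Pt m) : Prop :=
  u x = ∑ e ∈ Γ, π x e * u (x + e)

/-- The discrete Euclidean ball of center `y` and radius `R`. -/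
def ball {m : ℕ} (y : Pt m) (R : ℝ) : Set (Pt m) := {x | _root_.enorm (x - y) ≤ R}

/-- The discrete cube of center `y` and side `2R`. -/
def cube {m : ℕ} (y : Pt m) (R : ℝ) : Set (Pt m) :=
  {x | |((x.1 - y.1 : ℤ) : ℝ)| ≤ R ∧ ∀ i, |((x.2 i - y.2 i : ℤ) : ℝ)| ≤ R}

/-- Coercion of an integer vector to Euclidean space. -/
def toE {m : ℕ} (x : Fin m → ℤ) : EuclideanSpace ℝ (Fin m) := WithLp.toLp 2 (fun i => (x i : ℝ))

/-- The Lipschitz domain `𝒞 = {(x₁, x') ∈ ℤ^d : x₁ > φ(x')}`. -/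
def dom {m : ℕ} (φ : EuclideanSpace ℝ (Fin m) → ℝ) : Set (Pt m) :=
  {x | φ (toE x.2) < (x.1 : ℝ)}

/-- `δ(x)`: Euclidean distance from `x` to the boundary of `C`. -/
noncomputable def distToBdry {m : ℕ} (Γ : Finset (Pt m))
    (C : Set (Pt m)) (x : Pt m) : ℝ :=
  sInf ((fun z => _root_.enorm (x - z)) '' gbdry Γ C)

/-- `Γ` contains all standard unit vectors. -/
def UnitVecs {m : ℕ} (Γ : Finset (Pt m)) : Prop :=
  ((1 : ℤ), (0 : Fin m → ℤ)) ∈ Γ ∧ ∀ i, ((0 : ℤ), Pi.single i (1 : ℤ)) ∈ Γ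

/-- `π` is a transition kernel: `π(x,e) ∈ [0,1]` and `∑_{e ∈ Γ} π(x,e) = 1`. -/
def Kernel {m : ℕ} (Γ : Finset (Pt m)) (π : Pt m → Pt m → ℝ) : Prop :=
  (∀ x e, 0 ≤ π x e) ∧ (∀ x e, π x e ≤ 1) ∧ ∀ x, ∑ e ∈ Γ, π x e = 1

/-- The walk is centered: `∑_{e ∈ Γ} π(x,e) e = 0`. -/
def Centered {m : ℕ} (Γ : Finset (Pt m)) (π : Pt m → Pt m → ℝ) : Prop :=
  ∀ x, (∑ e ∈ Γ, π x e * (e.1 : ℝ)) = 0 ∧ ∀ i, (∑ e ∈ Γ, π x e * (e.2 i : ℝ)) = 0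

/-- Uniform ellipticity: `π(x,e) ≥ α` for all `x` and `e ∈ Γ`. -/
def Elliptic {m : ℕ} (Γ : Finset (Pt m)) (π : Pt m → Pt m → ℝ) (α : ℝ) : Prop :=
  ∀ x e, e ∈ Γ → α ≤ π x e

/-- `φ` is `A`-Lipschitz with `φ 0 = 0`. -/
def LipA {m : ℕ} (A : ℝ) (φ : EuclideanSpace ℝ (Fin m) → ℝ) : Prop :=
  (∀ a b, |φ a - φ b| ≤ A * ‖a - b‖) ∧ φ 0 = 0

/-- `𝒟_{R,r}(y) = B_R(y) ∩ {x ∈ 𝒞 : δ(x) > r}`. -/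
noncomputable def sliceD {m : ℕ} (Γ : Finset (Pt m)) (C : Set (Pt m))
    (y : Pt m) (R r : ℝ) : Set (Pt m) :=
  ball y R ∩ {x ∈ C | r < distToBdry Γ C x}

/-- `𝒞_{R,r}(y) = (B_R(y) ∩ 𝒞) \ 𝒟_{R,r}(y)`. -/
noncomputable def sliceC {m : ℕ} (Γ : Finset (Pt m)) (C : Set (Pt m))
    (y : Pt m) (R r : ℝ) : Set (Pt m) :=
  (ball y R ∩ C) \ sliceD Γ C y R r

noncomputable def ptToE {m : ℕ} (x : Pt m) : EuclideanSpace ℝ (Fin (m + 1)) :=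
  WithLp.toLp 2 (fun i => Fin.cases (x.1 : ℝ) (fun j => (x.2 j : ℝ)) i)

lemma ptToE_add {m : ℕ} (a b : Pt m) : ptToE (a + b) = ptToE a + ptToE b := by
  ext i
  induction i using Fin.cases <;>
    simp [ptToE, Prod.fst_add, Prod.snd_add]

lemma enorm_eq_norm {m : ℕ} (x : Pt m) : _root_.enorm x = ‖ptToE x‖ := by
  rw [EuclideanSpace.norm_eq, _root_.enorm]
  congr 1
  rw [Fin.sum_univ_succ]
  simp [ptToE, Real.norm_eq_abs, sq_abs]

lemma enorm_nonneg' {m : ℕ} (x : Pt m) : 0 ≤ _root_.enorm x := Real.sqrt_nonneg _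

lemma enorm_triangle {m : ℕ} (a b : Pt m) : _root_.enorm (a + b) ≤ _root_.enorm a + _root_.enorm b := by
  rw [enorm_eq_norm, enorm_eq_norm, enorm_eq_norm, ptToE_add]
  exact norm_add_le _ _

lemma enorm_neg' {m : ℕ} (x : Pt m) : _root_.enorm (-x) = _root_.enorm x := by
  simp [_root_.enorm, Prod.fst_neg, Prod.snd_neg]

lemma enorm_fst {m : ℕ} (x : Pt m) : |(x.1 : ℝ)| ≤ _root_.enorm x := by
  rw [_root_.enorm, ← Real.sqrt_sq_eq_abs]
  apply Real.sqrt_le_sqrt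
  have : 0 ≤ ∑ i, ((x.2 i : ℝ)) ^ 2 := Finset.sum_nonneg fun i _ => sq_nonneg _
  linarith

lemma enorm_snd {m : ℕ} (x : Pt m) (i : Fin m) : |(x.2 i : ℝ)| ≤ _root_.enorm x := by
  rw [_root_.enorm, ← Real.sqrt_sq_eq_abs]
  apply Real.sqrt_le_sqrt
  have h1 : ((x.2 i : ℝ)) ^ 2 ≤ ∑ j, ((x.2 j : ℝ)) ^ 2 :=
    Finset.single_le_sum (f := fun j => ((x.2 j : ℝ)) ^ 2) (fun j _ => sq_nonneg _)
      (Finset.mem_univ i)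
  nlinarith [sq_nonneg ((x.1 : ℝ))]

lemma ball_finite {m : ℕ} (y : Pt m) (R : ℝ) : (ball y R).Finite := by
  apply Set.Finite.subset
    (Set.Finite.prod (Set.finite_Icc (y.1 - ⌈R⌉) (y.1 + ⌈R⌉))
      (Set.Finite.pi fun i : Fin m => Set.finite_Icc (y.2 i - ⌈R⌉) (y.2 i + ⌈R⌉)))
  intro w hw
  have hb : _root_.enorm (w - y) ≤ R := hw
  have hRc : R ≤ (⌈R⌉ : ℝ) := Int.le_ceil R
  have key : ∀ a : ℤ, |(a : ℝ)| ≤ R → -⌈R⌉ ≤ a ∧ a ≤ ⌈R⌉ := by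
    intro a ha
    have h : ((|a| : ℤ) : ℝ) ≤ ((⌈R⌉ : ℤ) : ℝ) := by rw [Int.cast_abs]; linarith
    exact abs_le.mp (by exact_mod_cast h)
  have h1 := key (w.1 - y.1) (by
    have := enorm_fst (w - y)
    simpa using le_trans this hb)
  have h2 : ∀ i, -⌈R⌉ ≤ w.2 i - y.2 i ∧ w.2 i - y.2 i ≤ ⌈R⌉ := fun i => key _ (by
    have := enorm_snd (w - y) i
    simpa using le_trans this hb)
  refine ⟨Set.mem_Icc.mpr ⟨by linarith [h1.1], by linarith [h1.2]⟩, ?_⟩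
  intro i _
  exact Set.mem_Icc.mpr ⟨by linarith [(h2 i).1], by linarith [(h2 i).2]⟩

/-- the iteration step in the Carleson proof: from the smallness
of `δ(x)`, `u(x) ≤ ρ u(z)` and `|z - x₀| ≤ 3√d δ(x)` one gets
`(2R - |x-y|)^γ u(x) ≤ (2ρ/(1+ρ)) (2R - |z-y|)^γ u(z)`, and hence the bound by
`θ₀ = 2ρ/(1+ρ) < 1` times the maximum of `(2R - |x'-y|)^γ u(x')`. -/
theorem carleson_iteration_step {m : ℕ} (Γ : Finset (Pt m))
    (φ : EuclideanSpace ℝ (Fin m) → ℝ)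
    (ρ γ R : ℝ) (hρ0 : 0 < ρ) (hρ1 : ρ < 1) (hγ : 0 < γ) (hR : 0 < R)
    (y x z x0 : Pt m) (u : Pt m → ℝ)
    (hu0 : ∀ w ∈ dom φ ∩ ball y (2 * R), 0 ≤ u w)
    (hx : x ∈ dom φ ∩ ball y (2 * R)) (hz : z ∈ dom φ ∩ ball y (2 * R))
    (hx0 : x0 ∈ gbdry Γ (dom φ))
    (hδ : _root_.enorm (x - x0) = distToBdry Γ (dom φ) x)
    (hsmall : distToBdry Γ (dom φ) x <
      (1 - ((1 + ρ) / 2) ^ (1 / γ)) * (2 * R - _root_.enorm (x - y)) /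
        (8 * Real.sqrt ((m : ℝ) + 1)))
    (huz : u x ≤ ρ * u z)
    (hzx0 : _root_.enorm (z - x0) ≤ 3 * Real.sqrt ((m : ℝ) + 1) * distToBdry Γ (dom φ) x) :
    (2 * R - _root_.enorm (x - y)) ^ γ * u x ≤
        2 * ρ / (1 + ρ) * ((2 * R - _root_.enorm (z - y)) ^ γ * u z) ∧
      (2 * R - _root_.enorm (x - y)) ^ γ * u x ≤
        2 * ρ / (1 + ρ) *
          sSup ((fun w => (2 * R - _root_.enorm (w - y)) ^ γ * u w) '' (dom φ ∩ ball y (2 * R))) := by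

  obtain ⟨hxd, hxb⟩ := hx
  obtain ⟨hzd, hzb⟩ := hz
  set δ := distToBdry Γ (dom φ) x with hδdef
  set s := Real.sqrt ((m : ℝ) + 1) with hsdef
  set c := ((1 + ρ) / 2) ^ (1 / γ) with hcdef
  set a := 2 * R - _root_.enorm (x - y) with hadef
  set b := 2 * R - _root_.enorm (z - y) with hbdef
  have hs1 : 1 ≤ s := by
    rw [hsdef]
    have h : Real.sqrt 1 ≤ Real.sqrt ((m : ℝ) + 1) :=
      Real.sqrt_le_sqrt (by linarith [Nat.cast_nonneg (α := ℝ) m])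
    simpa using h
  have hδ0 : 0 ≤ δ := hδ ▸ enorm_nonneg' _
  have ha0 : 0 ≤ a := by have : _root_.enorm (x - y) ≤ 2 * R := hxb; linarith
  have hb0 : 0 ≤ b := by have : _root_.enorm (z - y) ≤ 2 * R := hzb; linarith
  have hc0 : 0 < c := Real.rpow_pos_of_pos (by linarith) _
  -- triangle inequalities
  have t1 : _root_.enorm (z - y) ≤ _root_.enorm (z - x) + _root_.enorm (x - y) := by
    have := enorm_triangle (z - x) (x - y)
    rwa [sub_add_sub_cancel] at this
  have t2 : _root_.enorm (z - x) ≤ _root_.enorm (z - x0) + _root_.enorm (x - x0) := by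
    have := enorm_triangle (z - x0) (x0 - x)
    rw [sub_add_sub_cancel] at this
    have hne : _root_.enorm (x0 - x) = _root_.enorm (x - x0) := by
      rw [show x0 - x = -(x - x0) by ring, enorm_neg']
    linarith [this, hne.le, hne.ge]
  have t3 : _root_.enorm (z - x) ≤ 4 * s * δ := by
    have h1 : _root_.enorm (x - x0) = δ := hδ
    have h2 : δ ≤ s * δ := by nlinarith
    linarith [hzx0, t2]
  have hsm : 8 * s * δ < (1 - c) * a := by
    have h8s : 0 < 8 * s := by linarith
    have h := (lt_div_iff₀ h8s).mp hsmall
    linarith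
  have hca : c * a ≤ b := by nlinarith [t1, t3, hsm, mul_nonneg (by linarith : (0:ℝ) ≤ s) hδ0]
  -- the power inequality
  have hcγ : c ^ γ = (1 + ρ) / 2 := by
    rw [hcdef, ← Real.rpow_mul (by linarith : (0:ℝ) ≤ (1 + ρ) / 2), one_div,
      inv_mul_cancel₀ hγ.ne', Real.rpow_one]
  have hpow : (1 + ρ) / 2 * a ^ γ ≤ b ^ γ := by
    have h := Real.rpow_le_rpow (mul_nonneg hc0.le ha0) hca hγ.le
    rwa [Real.mul_rpow hc0.le ha0, hcγ] at h
  have huz0 : 0 ≤ u z := hu0 z ⟨hzd, hzb⟩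
  have hag : 0 ≤ a ^ γ := Real.rpow_nonneg ha0 γ
  have hbg : 0 ≤ b ^ γ := Real.rpow_nonneg hb0 γ
  have first : a ^ γ * u x ≤ 2 * ρ / (1 + ρ) * (b ^ γ * u z) := by
    have step1 : a ^ γ * u x ≤ a ^ γ * (ρ * u z) := mul_le_mul_of_nonneg_left huz hag
    have step2 : a ^ γ * (ρ * u z) ≤ 2 * ρ / (1 + ρ) * (b ^ γ * u z) := by
      rw [div_mul_eq_mul_div, le_div_iff₀ (by linarith : (0:ℝ) < 1 + ρ)]
      nlinarith [mul_le_mul_of_nonneg_right hpow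
        (mul_nonneg (mul_nonneg hρ0.le huz0) (by norm_num : (0:ℝ) ≤ 2))]
    linarith
  refine ⟨first, ?_⟩
  have hfin : (dom φ ∩ ball y (2 * R)).Finite :=
    (ball_finite y (2 * R)).subset Set.inter_subset_right
  have hbdd : BddAbove ((fun w => (2 * R - _root_.enorm (w - y)) ^ γ * u w) '' (dom φ ∩ ball y (2 * R))) :=
    (hfin.image _).bddAbove
  have hmem : b ^ γ * u z ∈
      (fun w => (2 * R - _root_.enorm (w - y)) ^ γ * u w) '' (dom φ ∩ ball y (2 * R)) :=
    ⟨z, ⟨hzd, hzb⟩, rfl⟩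
  have hle := le_csSup hbdd hmem
  have hθ : (0:ℝ) ≤ 2 * ρ / (1 + ρ) := by positivity
  calc a ^ γ * u x ≤ 2 * ρ / (1 + ρ) * (b ^ γ * u z) := first
    _ ≤ 2 * ρ / (1 + ρ) * sSup _ := mul_le_mul_of_nonneg_left hle hθ
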